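/- Interpretation triples form a product category (a PRO) with the natural numbers as objects: (1) the composite and the tensor of interpretation triples are again interpretation triples (their three components are monotone); (2) composition is associative and the identity triples are two-sided units for it; (3) the tensor of the identity triples on m and on n is the identity triple on m + n, and the tensor is associative and has the identity triple on 0 as unit (under the canonical identifications of Fin (m+p) with the concatenation of Fin m and Fin p); (4) the interchange law holds: (f' ∘ f) ⊗ (g' ∘ g) = (f' ⊗ g') ∘ (f ⊗ g) for all interpretation triples f from m to n, f' from n to p, g from m' to n', g' from n' to p'. -/

import Mathlib

set_option linter.unusedVariables false

/-- An interpretation triple from `m` to `n`: a monotone covariant current map,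
a monotone contravariant current map, and a monotone heat map. -/
structure ITriple (X Y M : Type*) [Preorder X] [Preorder Y] [Preorder M]
    (m n : ℕ) where
  cov : (Fin m → X) → (Fin n → X)
  contra : (Fin n → Y) → (Fin m → Y)
  heat : (Fin m → X) × (Fin n → Y) → M
  cov_mono : Monotone cov
  contra_mono : Monotone contra
  heat_mono : Monotone heat

private lemma append_mono {α : Type*} [Preorder α] {m p : ℕ}
    {a a' : Fin m → α} {b b' : Fin p → α} (ha : a ≤ a') (hb : b ≤ b') :
    Fin.append a b ≤ Fin.append a' b' := by
  intro i
  refine Fin.addCases (fun j => ?_) (fun j => ?_) i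
  · simpa using ha j
  · simpa using hb j

variable {X Y M : Type*} [Preorder X] [Preorder Y] [AddCommMonoid M] [PartialOrder M]
    [IsOrderedAddMonoid M]

/-- Composition of interpretation triples: `g.comp f` is `g` after `f`. -/
def ITriple.comp {m n p : ℕ} (g : ITriple X Y M n p) (f : ITriple X Y M m n) :
    ITriple X Y M m p where
  cov := g.cov ∘ f.cov
  contra := f.contra ∘ g.contra
  heat := fun xy => f.heat (xy.1, g.contra xy.2) + g.heat (f.cov xy.1, xy.2)
  cov_mono := g.cov_mono.comp f.cov_mono
  contra_mono := f.contra_mono.comp g.contra_mono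
  heat_mono := fun a b hab =>
    add_le_add
      (f.heat_mono (Prod.mk_le_mk.mpr ⟨hab.1, g.contra_mono hab.2⟩))
      (g.heat_mono (Prod.mk_le_mk.mpr ⟨f.cov_mono hab.1, hab.2⟩))

/-- The tensor product of interpretation triples, acting componentwise on
concatenated tuples, with heats added. -/
def ITriple.tensor {m n p q : ℕ} (f : ITriple X Y M m n) (g : ITriple X Y M p q) :
    ITriple X Y M (m + p) (n + q) where
  cov := fun x => Fin.append (f.cov (x ∘ Fin.castAdd p)) (g.cov (x ∘ Fin.natAdd m))
  contra := fun y => Fin.append (f.contra (y ∘ Fin.castAdd q)) (g.contra (y ∘ Fin.natAdd n))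
  heat := fun xy =>
    f.heat (xy.1 ∘ Fin.castAdd p, xy.2 ∘ Fin.castAdd q) +
      g.heat (xy.1 ∘ Fin.natAdd m, xy.2 ∘ Fin.natAdd n)
  cov_mono := fun x x' hx =>
    append_mono (f.cov_mono fun j => hx _) (g.cov_mono fun j => hx _)
  contra_mono := fun y y' hy =>
    append_mono (f.contra_mono fun j => hy _) (g.contra_mono fun j => hy _)
  heat_mono := fun a b hab =>
    add_le_add
      (f.heat_mono (Prod.mk_le_mk.mpr ⟨fun j => hab.1 _, fun j => hab.2 _⟩))
      (g.heat_mono (Prod.mk_le_mk.mpr ⟨fun j => hab.1 _, fun j => hab.2 _⟩))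

/-- The identity interpretation triple on `n`: identity current maps and zero heat. -/
def ITriple.id (n : ℕ) : ITriple X Y M n n where
  cov := _root_.id
  contra := _root_.id
  heat := fun _ => 0
  cov_mono := monotone_id
  contra_mono := monotone_id
  heat_mono := monotone_const

private lemma ITriple.ext' {X Y M : Type*} [Preorder X] [Preorder Y] [AddCommMonoid M] [PartialOrder M]
    [IsOrderedAddMonoid M]
    {m n : ℕ} {f g : ITriple X Y M m n}
    (h1 : f.cov = g.cov) (h2 : f.contra = g.contra) (h3 : f.heat = g.heat) : f = g := by
  cases f; cases g; simp_all

private lemma ITriple.heq' {X Y M : Type*} [Preorder X] [Preorder Y] [AddCommMonoid M] [PartialOrder M]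
    [IsOrderedAddMonoid M]
    {m n m' n' : ℕ} (hm : m = m') (hn : n = n')
    {f : ITriple X Y M m n} {g : ITriple X Y M m' n'}
    (h1 : ∀ x : Fin m' → X, f.cov (x ∘ Fin.cast hm) = g.cov x ∘ Fin.cast hn)
    (h2 : ∀ y : Fin n' → Y, f.contra (y ∘ Fin.cast hn) = g.contra y ∘ Fin.cast hm)
    (h3 : ∀ (x : Fin m' → X) (y : Fin n' → Y),
      f.heat (x ∘ Fin.cast hm, y ∘ Fin.cast hn) = g.heat (x, y)) :
    HEq f g := by
  subst hm hn
  simp only [Fin.cast_refl, Function.comp_id] at h1 h2 h3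
  exact heq_of_eq (ITriple.ext' (funext h1) (funext h2) (funext fun p => h3 p.1 p.2))

/-- Interpretation triples form a product category (a PRO) with the
natural numbers as objects: composites and tensors have monotone components,
composition is associative with the identity triples as units, the tensor of
identities is an identity, the tensor is associative and unital (up to the canonical
identifications, expressed via `HEq`), and the interchange law holds. -/
theorem iTriple_product_category
    (hadd : ∀ a b c : M, a < b → c + a < c + b) :
    -- (1) composites and tensors are interpretation triples: their components are monotone
    (∀ (m n p : ℕ) (f : ITriple X Y M m n) (g : ITriple X Y M n p),
      Monotone (g.comp f).cov ∧ Monotone (g.comp f).contra ∧ Monotone (g.comp f).heat) ∧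
    (∀ (m n p q : ℕ) (f : ITriple X Y M m n) (g : ITriple X Y M p q),
      Monotone (f.tensor g).cov ∧ Monotone (f.tensor g).contra ∧ Monotone (f.tensor g).heat) ∧
    -- (2) composition is associative and unital
    (∀ (m n p q : ℕ) (f : ITriple X Y M m n) (g : ITriple X Y M n p)
        (h : ITriple X Y M p q),
      (h.comp g).comp f = h.comp (g.comp f)) ∧
    (∀ (m n : ℕ) (f : ITriple X Y M m n),
      f.comp (ITriple.id m) = f ∧ (ITriple.id n).comp f = f) ∧
    -- (3) tensor of identities, associativity and unitality of the tensor
    (∀ m n : ℕ,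
      (ITriple.id m : ITriple X Y M m m).tensor (ITriple.id n) = ITriple.id (m + n)) ∧
    (∀ (m n p q r s : ℕ) (f : ITriple X Y M m n) (g : ITriple X Y M p q)
        (h : ITriple X Y M r s),
      HEq ((f.tensor g).tensor h) (f.tensor (g.tensor h))) ∧
    (∀ (m n : ℕ) (f : ITriple X Y M m n),
      HEq (f.tensor (ITriple.id 0)) f ∧ HEq ((ITriple.id 0 : ITriple X Y M 0 0).tensor f) f) ∧
    -- (4) the interchange law
    (∀ (m n p m' n' p' : ℕ) (f : ITriple X Y M m n) (f' : ITriple X Y M n p)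
        (g : ITriple X Y M m' n') (g' : ITriple X Y M n' p'),
      (f'.comp f).tensor (g'.comp g) = (f'.tensor g').comp (f.tensor g)) := by
  refine ⟨?_, ?_, ?_, ?_, ?_, ?_, ?_, ?_⟩
  · exact fun m n p f g => ⟨(g.comp f).cov_mono, (g.comp f).contra_mono, (g.comp f).heat_mono⟩
  · exact fun m n p q f g => ⟨(f.tensor g).cov_mono, (f.tensor g).contra_mono, (f.tensor g).heat_mono⟩
  · intro m n p q f g h
    refine ITriple.ext' rfl rfl (funext fun xy => ?_)
    simp [ITriple.comp, add_assoc]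
  · intro m n f
    constructor <;>
      exact ITriple.ext' rfl rfl (funext fun xy => by simp [ITriple.comp, ITriple.id])
  · intro m n
    refine ITriple.ext' ?_ ?_ ?_
    · funext x
      simp only [ITriple.tensor, ITriple.id, id_eq]
      exact Fin.append_castAdd_natAdd
    · funext y
      simp only [ITriple.tensor, ITriple.id, id_eq]
      exact Fin.append_castAdd_natAdd
    · funext xy; simp [ITriple.tensor, ITriple.id]
  · intro m n p q r s f g h
    refine ITriple.heq' (Nat.add_assoc m p r) (Nat.add_assoc n q s) ?_ ?_ ?_
    · intro x
      have e1 : (x ∘ Fin.cast (Nat.add_assoc m p r)) ∘ Fin.castAdd r ∘ Fin.castAdd p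
          = x ∘ Fin.castAdd (p + r) := by
        funext i; simp only [Function.comp_apply]; refine congrArg _ (Fin.ext ?_); simp only [Fin.coe_cast, Fin.coe_castAdd, Fin.coe_natAdd]; try omega
      have e2 : (x ∘ Fin.cast (Nat.add_assoc m p r)) ∘ Fin.castAdd r ∘ Fin.natAdd m
          = (x ∘ Fin.natAdd m) ∘ Fin.castAdd r := by
        funext i; simp only [Function.comp_apply]; refine congrArg _ (Fin.ext ?_); simp only [Fin.coe_cast, Fin.coe_castAdd, Fin.coe_natAdd]; try omega
      have e3 : (x ∘ Fin.cast (Nat.add_assoc m p r)) ∘ Fin.natAdd (m + p)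
          = (x ∘ Fin.natAdd m) ∘ Fin.natAdd p := by
        funext i; simp only [Function.comp_apply]; refine congrArg _ (Fin.ext ?_); simp only [Fin.coe_cast, Fin.coe_castAdd, Fin.coe_natAdd]; try omega
      simp only [ITriple.tensor, Function.comp_assoc, e1, e2, e3]
      rw [Fin.append_assoc]
    · intro y
      have e1 : (y ∘ Fin.cast (Nat.add_assoc n q s)) ∘ Fin.castAdd s ∘ Fin.castAdd q
          = y ∘ Fin.castAdd (q + s) := by
        funext i; simp only [Function.comp_apply]; refine congrArg _ (Fin.ext ?_); simp only [Fin.coe_cast, Fin.coe_castAdd, Fin.coe_natAdd]; try omega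
      have e2 : (y ∘ Fin.cast (Nat.add_assoc n q s)) ∘ Fin.castAdd s ∘ Fin.natAdd n
          = (y ∘ Fin.natAdd n) ∘ Fin.castAdd s := by
        funext i; simp only [Function.comp_apply]; refine congrArg _ (Fin.ext ?_); simp only [Fin.coe_cast, Fin.coe_castAdd, Fin.coe_natAdd]; try omega
      have e3 : (y ∘ Fin.cast (Nat.add_assoc n q s)) ∘ Fin.natAdd (n + q)
          = (y ∘ Fin.natAdd n) ∘ Fin.natAdd q := by
        funext i; simp only [Function.comp_apply]; refine congrArg _ (Fin.ext ?_); simp only [Fin.coe_cast, Fin.coe_castAdd, Fin.coe_natAdd]; try omega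
      simp only [ITriple.tensor, Function.comp_assoc, e1, e2, e3]
      rw [Fin.append_assoc]
    · intro x y
      have e1 : (x ∘ Fin.cast (Nat.add_assoc m p r)) ∘ Fin.castAdd r ∘ Fin.castAdd p
          = x ∘ Fin.castAdd (p + r) := by
        funext i; simp only [Function.comp_apply]; refine congrArg _ (Fin.ext ?_); simp only [Fin.coe_cast, Fin.coe_castAdd, Fin.coe_natAdd]; try omega
      have e2 : (x ∘ Fin.cast (Nat.add_assoc m p r)) ∘ Fin.castAdd r ∘ Fin.natAdd m
          = (x ∘ Fin.natAdd m) ∘ Fin.castAdd r := by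
        funext i; simp only [Function.comp_apply]; refine congrArg _ (Fin.ext ?_); simp only [Fin.coe_cast, Fin.coe_castAdd, Fin.coe_natAdd]; try omega
      have e3 : (x ∘ Fin.cast (Nat.add_assoc m p r)) ∘ Fin.natAdd (m + p)
          = (x ∘ Fin.natAdd m) ∘ Fin.natAdd p := by
        funext i; simp only [Function.comp_apply]; refine congrArg _ (Fin.ext ?_); simp only [Fin.coe_cast, Fin.coe_castAdd, Fin.coe_natAdd]; try omega
      have f1 : (y ∘ Fin.cast (Nat.add_assoc n q s)) ∘ Fin.castAdd s ∘ Fin.castAdd q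
          = y ∘ Fin.castAdd (q + s) := by
        funext i; simp only [Function.comp_apply]; refine congrArg _ (Fin.ext ?_); simp only [Fin.coe_cast, Fin.coe_castAdd, Fin.coe_natAdd]; try omega
      have f2 : (y ∘ Fin.cast (Nat.add_assoc n q s)) ∘ Fin.castAdd s ∘ Fin.natAdd n
          = (y ∘ Fin.natAdd n) ∘ Fin.castAdd s := by
        funext i; simp only [Function.comp_apply]; refine congrArg _ (Fin.ext ?_); simp only [Fin.coe_cast, Fin.coe_castAdd, Fin.coe_natAdd]; try omega
      have f3 : (y ∘ Fin.cast (Nat.add_assoc n q s)) ∘ Fin.natAdd (n + q)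
          = (y ∘ Fin.natAdd n) ∘ Fin.natAdd q := by
        funext i; simp only [Function.comp_apply]; refine congrArg _ (Fin.ext ?_); simp only [Fin.coe_cast, Fin.coe_castAdd, Fin.coe_natAdd]; try omega
      simp only [ITriple.tensor, Function.comp_assoc, e1, e2, e3, f1, f2, f3]
      rw [add_assoc]
  · intro m n f
    constructor
    · refine ITriple.heq' (Nat.add_zero m) (Nat.add_zero n) ?_ ?_ ?_
      · intro x
        have e1 : (x ∘ Fin.cast (Nat.add_zero m)) ∘ Fin.castAdd 0 = x := by
          funext i; simp only [Function.comp_apply]; refine congrArg _ (Fin.ext ?_); simp only [Fin.coe_cast, Fin.coe_castAdd, Fin.coe_natAdd]; try omega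
        simp only [ITriple.tensor, ITriple.id, Function.comp_assoc, e1, id_eq]
        rw [Fin.append_right_nil _ _ rfl]
      · intro y
        have e1 : (y ∘ Fin.cast (Nat.add_zero n)) ∘ Fin.castAdd 0 = y := by
          funext i; simp only [Function.comp_apply]; refine congrArg _ (Fin.ext ?_); simp only [Fin.coe_cast, Fin.coe_castAdd, Fin.coe_natAdd]; try omega
        simp only [ITriple.tensor, ITriple.id, Function.comp_assoc, e1, id_eq]
        rw [Fin.append_right_nil _ _ rfl]
      · intro x y
        have e1 : (x ∘ Fin.cast (Nat.add_zero m)) ∘ Fin.castAdd 0 = x := by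
          funext i; simp only [Function.comp_apply]; refine congrArg _ (Fin.ext ?_); simp only [Fin.coe_cast, Fin.coe_castAdd, Fin.coe_natAdd]; try omega
        have f1 : (y ∘ Fin.cast (Nat.add_zero n)) ∘ Fin.castAdd 0 = y := by
          funext i; simp only [Function.comp_apply]; refine congrArg _ (Fin.ext ?_); simp only [Fin.coe_cast, Fin.coe_castAdd, Fin.coe_natAdd]; try omega
        simp only [ITriple.tensor, ITriple.id, Function.comp_assoc, e1, f1]
        simp
    · refine ITriple.heq' (Nat.zero_add m) (Nat.zero_add n) ?_ ?_ ?_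
      · intro x
        have e1 : (x ∘ Fin.cast (Nat.zero_add m)) ∘ Fin.natAdd 0 = x := by
          funext i; simp only [Function.comp_apply]; refine congrArg _ (Fin.ext ?_); simp only [Fin.coe_cast, Fin.coe_castAdd, Fin.coe_natAdd]; try omega
        simp only [ITriple.tensor, ITriple.id, Function.comp_assoc, e1, id_eq]
        rw [Fin.append_left_nil _ _ rfl]
      · intro y
        have e1 : (y ∘ Fin.cast (Nat.zero_add n)) ∘ Fin.natAdd 0 = y := by
          funext i; simp only [Function.comp_apply]; refine congrArg _ (Fin.ext ?_); simp only [Fin.coe_cast, Fin.coe_castAdd, Fin.coe_natAdd]; try omega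
        simp only [ITriple.tensor, ITriple.id, Function.comp_assoc, e1, id_eq]
        rw [Fin.append_left_nil _ _ rfl]
      · intro x y
        have e1 : (x ∘ Fin.cast (Nat.zero_add m)) ∘ Fin.natAdd 0 = x := by
          funext i; simp only [Function.comp_apply]; refine congrArg _ (Fin.ext ?_); simp only [Fin.coe_cast, Fin.coe_castAdd, Fin.coe_natAdd]; try omega
        have f1 : (y ∘ Fin.cast (Nat.zero_add n)) ∘ Fin.natAdd 0 = y := by
          funext i; simp only [Function.comp_apply]; refine congrArg _ (Fin.ext ?_); simp only [Fin.coe_cast, Fin.coe_castAdd, Fin.coe_natAdd]; try omega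
        simp only [ITriple.tensor, ITriple.id, Function.comp_assoc, e1, f1]
        simp
  · intro m n p m' n' p' f f' g g'
    refine ITriple.ext' ?_ ?_ ?_
    · funext x
      simp [ITriple.tensor, ITriple.comp, Function.comp_def]
    · funext y
      simp [ITriple.tensor, ITriple.comp, Function.comp_def]
    · funext xy
      simp only [ITriple.tensor, ITriple.comp, Function.comp_def]
      simp only [Fin.append_left, Fin.append_right]
      exact add_add_add_comm _ _ _ _
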